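/- For integers $k \ge 1$ and $n \ge n' \ge 1$, we have $p(n+1,k) + p(n'-1,k) \ge p(n,k) + p(n',k)$. -/
import Mathlib


/-- `p n k` : maximum of `∏ q i` over partitions of `n` into `k` nonnegative
parts each strictly less than `n` (so `p 0 0 = 1`). -/
noncomputable def p (n k : ℕ) : ℕ :=
  sSup {m | ∃ q : Fin k → ℕ, (∑ i, q i) = n ∧ (∀ i, q i < n) ∧ m = ∏ i, q i}

lemma p_bdd (n k : ℕ) :
    BddAbove {m | ∃ q : Fin k → ℕ, (∑ i, q i) = n ∧ (∀ i, q i < n) ∧ m = ∏ i, q i} := by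
  refine ⟨n ^ k, ?_⟩
  rintro x ⟨q, hsum, hlt, rfl⟩
  calc ∏ i, q i ≤ ∏ _i : Fin k, n := Finset.prod_le_prod' fun i _ => (hlt i).le
    _ = n ^ k := by simp

lemma le_p {n k x : ℕ} (q : Fin k → ℕ) (hsum : (∑ i, q i) = n) (hlt : ∀ i, q i < n)
    (hx : x = ∏ i, q i) : x ≤ p n k :=
  le_csSup (p_bdd n k) ⟨q, hsum, hlt, hx⟩

lemma p_witness {n k : ℕ} (h : 0 < p n k) :
    ∃ q : Fin k → ℕ, (∑ i, q i) = n ∧ (∀ i, q i < n) ∧ p n k = ∏ i, q i := by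
  have hne : {m | ∃ q : Fin k → ℕ, (∑ i, q i) = n ∧ (∀ i, q i < n) ∧ m = ∏ i, q i}.Nonempty := by
    by_contra h'
    rw [Set.not_nonempty_iff_eq_empty] at h'
    rw [p, h'] at h
    simp at h
  exact Nat.sSup_mem hne (p_bdd n k)

lemma p_one (n : ℕ) : p n 1 = 0 := by
  have h : {m | ∃ q : Fin 1 → ℕ, (∑ i, q i) = n ∧ (∀ i, q i < n) ∧ m = ∏ i, q i} = ∅ := by
    rw [Set.eq_empty_iff_forall_notMem]
    rintro x ⟨q, hsum, hlt, -⟩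
    rw [Fin.sum_univ_one] at hsum
    have := hlt 0
    omega
  rw [p, h]
  simp

lemma one_step (k m : ℕ) (hk : 2 ≤ k) (hm : 1 ≤ m) :
    p m k + p m k ≤ p (m + 1) k + p (m - 1) k := by
  rcases Nat.eq_zero_or_pos (p m k) with h0 | hpos
  · simp [h0]
  obtain ⟨q, hsum, hlt, hP⟩ := p_witness hpos
  have hpos1 : ∀ i, 1 ≤ q i := by
    intro i
    by_contra h
    have hq0 : q i = 0 := by omega
    have : (∏ j, q j) = 0 := Finset.prod_eq_zero (Finset.mem_univ i) hq0
    omega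
  have hkm : k ≤ m := by
    calc k = ∑ _i : Fin k, 1 := by simp
      _ ≤ ∑ i, q i := Finset.sum_le_sum fun i _ => hpos1 i
      _ = m := hsum
  have hne : (Finset.univ : Finset (Fin k)).Nonempty := by
    rw [Finset.univ_nonempty_iff]
    exact Fin.pos_iff_nonempty.mp (by omega)
  obtain ⟨i, -, hmax⟩ := Finset.exists_max_image Finset.univ q hne
  have hsplit : q i + ∑ j ∈ Finset.univ.erase i, q j = m := by
    rw [Finset.add_sum_erase _ q (Finset.mem_univ i), hsum]
  have hprodsplit : (∏ j, q j) = q i * ∏ j ∈ Finset.univ.erase i, q j :=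
    (Finset.mul_prod_erase _ q (Finset.mem_univ i)).symm
  set R := ∏ j ∈ Finset.univ.erase i, q j with hR
  -- sums and products of updated functions
  have hsum_upd : ∀ v : ℕ, (∑ j, Function.update q i v j) = v + (m - q i) := by
    intro v
    rw [Finset.sum_update_of_mem (Finset.mem_univ i)]
    congr 1
    rw [Finset.sdiff_singleton_eq_erase]
    omega
  have hprod_upd : ∀ v : ℕ, (∏ j, Function.update q i v j) = v * R := by
    intro v
    rw [Finset.prod_update_of_mem (Finset.mem_univ i), Finset.sdiff_singleton_eq_erase]
  have hqim : q i < m := hlt i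
  rcases Nat.lt_or_ge (q i) 2 with hqi | hqi
  · -- all parts equal 1, m = k
    have hall : ∀ j, q j = 1 := by
      intro j
      have := hmax j (Finset.mem_univ j)
      have := hpos1 j
      omega
    have hmk : m = k := by
      rw [← hsum]
      simp [hall]
    have hPm : p m k = 1 := by
      rw [hP]
      exact Finset.prod_eq_one fun j _ => hall j
    rcases Nat.lt_or_ge k 3 with hk2 | hk3
    · -- k = 2, m = 2 : show 2 ≤ p 3 2
      have hk2' : k = 2 := by omega
      subst hk2'
      have hm2 : m = 2 := hmk
      subst hm2
      have h2 : 2 ≤ p (2 + 1) 2 := by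
        refine le_p ![2, 1] (by decide) (by decide) (by decide)
      have h1 : p (2 - 1) 2 = p 1 2 := rfl
      omega
    · -- k ≥ 3 : show 2 ≤ p (m+1) k
      have hR1 : R = 1 := Finset.prod_eq_one fun j _ => hall j
      have h2 : 2 ≤ p (m + 1) k := by
        refine le_p (Function.update q i 2) ?_ ?_ ?_
        · rw [hsum_upd]
          have := hall i
          omega
        · intro j
          rcases eq_or_ne j i with rfl | hj
          · simp only [Function.update_self]
            omega
          · simp only [Function.update_of_ne hj]
            have := hlt j
            omega
        · rw [hprod_upd, hR1]
      omega
  · -- main case: q i ≥ 2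
    have hother : ∀ j, j ≠ i → q j + q i ≤ m := by
      intro j hj
      have : q j + q i = ∑ x ∈ {j, i}, q x := (Finset.sum_pair hj).symm
      rw [this, ← hsum]
      exact Finset.sum_le_sum_of_subset (Finset.subset_univ _)
    have hup : (q i + 1) * R ≤ p (m + 1) k := by
      refine le_p (Function.update q i (q i + 1)) ?_ ?_ ?_
      · rw [hsum_upd]; omega
      · intro j
        rcases eq_or_ne j i with rfl | hj
        · simp only [Function.update_self]; omega
        · simp only [Function.update_of_ne hj]
          have := hlt j
          omega
      · rw [hprod_upd]
    have hdown : (q i - 1) * R ≤ p (m - 1) k := by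
      refine le_p (Function.update q i (q i - 1)) ?_ ?_ ?_
      · rw [hsum_upd]; omega
      · intro j
        rcases eq_or_ne j i with rfl | hj
        · simp only [Function.update_self]; omega
        · simp only [Function.update_of_ne hj]
          have := hother j hj
          omega
      · rw [hprod_upd]
    have hPm : p m k = q i * R := by rw [hP, hprodsplit]
    obtain ⟨b, hb⟩ : ∃ b, q i = b + 2 := ⟨q i - 2, by omega⟩
    have key : (q i + 1) * R + (q i - 1) * R = p m k + p m k := by
      rw [hPm, hb]
      have : b + 2 - 1 = b + 1 := by omega
      rw [this]
      ring
    omega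

lemma convex_aux (k : ℕ) (hk : 2 ≤ k) :
    ∀ d n', 1 ≤ n' → p (n' + d) k + p n' k ≤ p (n' + d + 1) k + p (n' - 1) k := by
  intro d
  induction d with
  | zero => intro n' hn'; simpa using one_step k n' hk hn'
  | succ d ih =>
    intro n' hn'
    have h1 := ih n' hn'
    have h2 := one_step k (n' + d + 1) hk (by omega)
    have h3 : n' + d + 1 - 1 = n' + d := by omega
    rw [h3] at h2
    have h4 : n' + (d + 1) = n' + d + 1 := by omega
    rw [h4]
    omega

theorem p_convexity (k n n' : ℕ) (hk : 1 ≤ k) (hn' : 1 ≤ n') (hn : n' ≤ n) :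
    p n k + p n' k ≤ p (n + 1) k + p (n' - 1) k := by
  rcases Nat.lt_or_ge k 2 with hk1 | hk2
  · have hk1' : k = 1 := by omega
    subst hk1'
    simp [p_one]
  · have := convex_aux k hk2 (n - n') n' hn'
    have hnn : n' + (n - n') = n := by omega
    rw [hnn] at this
    exact this
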